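/- Let T be a tail-biting trellis realization that is state-trim, branch-trim, proper, span-two-observable and span-two-controllable, realizing a code C ⊆ F^n such that neither C nor C^⊥ contains a nonzero codeword supported on an interval of length at most 2 (cyclically). Let T' be a proper and trim realization of C differing from T only in the state space at one time, say time 1, with dim S_1' ≤ dim S_1, and in the two incident constraint codes, with dim C_0' ≤ dim C_0 and dim C_1' ≤ dim C_1. If T' is also observable, then there is a linear isomorphism ψ: S_1 → S_1' such that C_0' = {(s_0, a_0, ψ(s_1)) : (s_0, a_0, s_1) ∈ C_0} and C_1' = {(ψ(s_1), a_1, s_2) : (s_1, a_1, s_2) ∈ C_1}; in particular dim S_1' = dim S_1 and T' is isomorphic to T. -/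

import Mathlib

open Module

lemma cast_fam {α : Sort*} {S : α → Sort*} (s : ∀ j, S j) {i j : α} (h : i = j) :
    s j = cast (congrArg S h) (s i) := by subst h; rfl

lemma cast_fam_zero {α : Sort*} {S : α → Type*} [∀ k, Zero (S k)] {i j : α} (h : i = j) :
    cast (congrArg S h) (0 : S i) = 0 := by subst h; rfl

lemma finrank_map_fst_fst {K A B M : Type*} [Field K] [AddCommGroup A] [Module K A]
    [AddCommGroup B] [Module K B] [AddCommGroup M] [Module K M]
    [FiniteDimensional K A] [FiniteDimensional K B] [FiniteDimensional K M]
    (p : Submodule K (A × B × M)) (hprop : ∀ m : M, ((0 : A), (0 : B), m) ∈ p → m = 0) :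
    Module.finrank K (p.map ((LinearMap.id (R := K) (M := A)).prodMap (LinearMap.fst K B M)))
      = Module.finrank K p := by
  have hinj : Function.Injective
      ((((LinearMap.id (R := K) (M := A)).prodMap (LinearMap.fst K B M))).comp p.subtype) := by
    rintro ⟨⟨a, b, m⟩, hx⟩ ⟨⟨a', b', m'⟩, hy⟩ hxy
    have h1 : a = a' := congrArg Prod.fst hxy
    have h2 : b = b' := congrArg Prod.snd hxy
    have hmem : ((0 : A), (0 : B), m - m') ∈ p := by
      simpa [h1, h2] using p.sub_mem hx hy
    have h3 : m = m' := sub_eq_zero.mp (hprop _ hmem)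
    exact Subtype.ext (by simp [h1, h2, h3])
  rw [← LinearMap.finrank_range_of_inj hinj, LinearMap.range_comp, Submodule.range_subtype]

lemma finrank_map_snd' {K M Q : Type*} [Field K] [AddCommGroup M] [Module K M]
    [AddCommGroup Q] [Module K Q] [FiniteDimensional K M] [FiniteDimensional K Q]
    (p : Submodule K (M × Q)) (hprop : ∀ m : M, (m, (0 : Q)) ∈ p → m = 0) :
    Module.finrank K (p.map (LinearMap.snd K M Q)) = Module.finrank K p := by
  have hinj : Function.Injective ((LinearMap.snd K M Q).comp p.subtype) := by
    rintro ⟨⟨m, q⟩, hx⟩ ⟨⟨m', q'⟩, hy⟩ hxy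
    have h2 : q = q' := hxy
    have hmem : (m - m', (0 : Q)) ∈ p := by simpa [h2] using p.sub_mem hx hy
    have h3 : m = m' := sub_eq_zero.mp (hprop _ hmem)
    exact Subtype.ext (by simp [h2, h3])
  rw [← LinearMap.finrank_range_of_inj hinj, LinearMap.range_comp, Submodule.range_subtype]

/-- The behavior of a tail-biting trellis realization with state spaces `S i`, symbol
spaces `A i` (`i ∈ ℤ/m`), and constraint codes `C i ⊆ S i × A i × S (i+1)`: the subspace of
all pairs `(a, s)` of symbol/state sequences satisfying all local constraints. -/
def trellisBehavior {F : Type*} [Field F] {m : ℕ} (S A : ZMod m → Type*)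
    [∀ i, AddCommGroup (S i)] [∀ i, Module F (S i)]
    [∀ i, AddCommGroup (A i)] [∀ i, Module F (A i)]
    (C : ∀ i, Submodule F (S i × A i × S (i + 1))) :
    Submodule F ((∀ i, A i) × (∀ i, S i)) where
  carrier := {p | ∀ i, (p.2 i, p.1 i, p.2 (i + 1)) ∈ C i}
  zero_mem' := by intro i; exact (C i).zero_mem
  add_mem' := by intro p q hp hq i; exact (C i).add_mem (hp i) (hq i)
  smul_mem' := by intro r p hp i; exact (C i).smul_mem r (hp i)

/-- A valid trajectory of the realization `T'` obtained from the trellis `T` (with state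
spaces `S j` and constraint codes `C j`) by replacing the state space at time `1` with `S1'`
and the two incident constraint codes with `C0'` and `C1'`: the symbol sequence is `a`, the
states are `s j` for `j ≠ 1` (the value `s 1` is irrelevant) and `t : S1'` at time `1`. -/
def trajT' {F : Type*} [Field F] {n : ℕ} (S : ZMod n → Type*)
    [∀ i, AddCommGroup (S i)] [∀ i, Module F (S i)]
    (C : ∀ i, Submodule F (S i × F × S (i + 1)))
    (S1' : Type*) [AddCommGroup S1'] [Module F S1']
    (C0' : Submodule F (S 0 × F × S1')) (C1' : Submodule F (S1' × F × S (1 + 1)))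
    (a : ZMod n → F) (s : ∀ j, S j) (t : S1') : Prop :=
  (s 0, a 0, t) ∈ C0' ∧ (t, a 1, s (1 + 1)) ∈ C1' ∧
    ∀ j, j ≠ 0 → j ≠ 1 → (s j, a j, s (j + 1)) ∈ C j

/-- Local irreducibility: let `T` be a state-trim, branch-trim, proper, span-two-observable
and span-two-controllable tail-biting trellis of length `n` (symbol spaces `= F`), realizing
a code `C ⊆ Fⁿ` such that neither `C` nor `C^⊥` contains a nonzero codeword supported on a
cyclic interval of length at most `2`. Let `T'` be a proper and trim realization of the same
code differing from `T` only at state time `1`, with `dim S1' ≤ dim S₁`, `dim C0' ≤ dim C₀`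
and `dim C1' ≤ dim C₁`. If `T'` is also observable, then there is a linear isomorphism
`ψ : S₁ ≃ S1'` with `C0' = {(s₀,a₀,ψ s₁) : (s₀,a₀,s₁) ∈ C₀}` and
`C1' = {(ψ s₁,a₁,s₂) : (s₁,a₁,s₂) ∈ C₁}`; in particular `dim S1' = dim S₁` and `T'` is
isomorphic to `T`. -/
theorem locally_irreducible
    {F : Type*} [Field F] [Fintype F] {n : ℕ} [NeZero n]
    (S : ZMod n → Type*)
    [∀ i, AddCommGroup (S i)] [∀ i, Module F (S i)] [∀ i, FiniteDimensional F (S i)]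
    (C : ∀ i, Submodule F (S i × F × S (i + 1)))
    (S1' : Type*) [AddCommGroup S1'] [Module F S1'] [FiniteDimensional F S1']
    (C0' : Submodule F (S 0 × F × S1')) (C1' : Submodule F (S1' × F × S (1 + 1)))
    -- `T` is state-trim:
    (hStateTrim : ∀ (i : ZMod n) (u : S i),
      ∃ p ∈ trellisBehavior S (fun _ => F) C, p.2 i = u)
    -- `T` is branch-trim:
    (hBranchTrim : ∀ (i : ZMod n), ∀ b ∈ C i,
      ∃ p ∈ trellisBehavior S (fun _ => F) C, (p.2 i, p.1 i, p.2 (i + 1)) = b)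
    -- `T` is proper:
    (hProper : ∀ i : ZMod n,
      (∀ u : S i, (u, (0 : F), (0 : S (i + 1))) ∈ C i → u = 0) ∧
      (∀ v : S (i + 1), ((0 : S i), (0 : F), v) ∈ C i → v = 0))
    -- `T` is span-two-observable:
    (hS2O : ∀ (i : ZMod n) (s : ∀ j, S j),
      (∀ j, j ≠ i - 2 → j ≠ i - 1 → (s j, (0 : F), s (j + 1)) ∈ C j) →
      ∀ j, j ≠ i - 1 → s j = 0)
    -- `T` is span-two-controllable:
    (hS2C : ∀ (i : ZMod n) (u : S i) (v : S (i - 2)),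
      ∃ (s : ∀ j, S j) (a : ZMod n → F), s i = u ∧ s (i - 2) = v ∧
        ∀ j, j ≠ i - 2 → j ≠ i - 1 → (s j, a j, s (j + 1)) ∈ C j)
    -- the code `C` contains no nonzero codeword supported on an interval of length ≤ 2:
    (hCsupp : ∀ (i : ZMod n) (a : ZMod n → F),
      (∃ s, (a, s) ∈ trellisBehavior S (fun _ => F) C) →
      (∀ j, j ≠ i → j ≠ i + 1 → a j = 0) → a = 0)
    -- the dual code `C^⊥` contains no nonzero codeword supported on an interval of length ≤ 2:
    (hCdualsupp : ∀ (i : ZMod n) (b : ZMod n → F),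
      (∀ a : ZMod n → F, (∃ s, (a, s) ∈ trellisBehavior S (fun _ => F) C) →
        ∑ j, a j * b j = 0) →
      (∀ j, j ≠ i → j ≠ i + 1 → b j = 0) → b = 0)
    -- `T'` is trim at state time `1` and state-trim:
    (hTrim' : ∀ t : S1', ∃ a s, trajT' S C S1' C0' C1' a s t)
    (hStateTrim' : ∀ (j : ZMod n) (u : S j),
      ∃ a s t, trajT' S C S1' C0' C1' a s t ∧ s j = u)
    -- `T'` is proper at state time `1`:
    (hProper' : (∀ u : S 0, (u, (0 : F), (0 : S1')) ∈ C0' → u = 0) ∧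
      (∀ t : S1', ((0 : S 0), (0 : F), t) ∈ C0' → t = 0) ∧
      (∀ t : S1', (t, (0 : F), (0 : S (1 + 1))) ∈ C1' → t = 0) ∧
      (∀ v : S (1 + 1), ((0 : S1'), (0 : F), v) ∈ C1' → v = 0))
    -- `T'` realizes the same code as `T`:
    (hCode : ∀ a : ZMod n → F,
      (∃ s, (a, s) ∈ trellisBehavior S (fun _ => F) C) ↔
        (∃ s t, trajT' S C S1' C0' C1' a s t))
    -- the dimensions of `T'` do not exceed those of `T`:
    (hdimS : finrank F S1' ≤ finrank F (S (0 + 1)))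
    (hdimC0 : finrank F ↥C0' ≤ finrank F ↥(C 0))
    (hdimC1 : finrank F ↥C1' ≤ finrank F ↥(C 1))
    -- `T'` is observable:
    (hObs' : ∀ (a : ZMod n → F) (s : ∀ j, S j) (t : S1') (s' : ∀ j, S j) (t' : S1'),
      trajT' S C S1' C0' C1' a s t → trajT' S C S1' C0' C1' a s' t' →
      t = t' ∧ ∀ j, j ≠ 1 → s j = s' j) :
    ∃ ψ : S (0 + 1) ≃ₗ[F] S1',
      (∀ z : S 0 × F × S1', z ∈ C0' ↔ ∃ x ∈ C 0, z = (x.1, x.2.1, ψ x.2.2)) ∧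
      (∀ z : S1' × F × S (1 + 1), z ∈ C1' ↔ ∃ y ∈ C 1,
        z = (ψ (cast (congrArg S (zero_add (1 : ZMod n)).symm) y.1), y.2.1, y.2.2)) ∧
      finrank F S1' = finrank F (S (0 + 1)) := by
  
  -- dispose of degenerate lengths
  rcases n with - | n
  · exact absurd rfl (NeZero.ne 0)
  rcases n with - | n
  · -- n = 1 : the hypotheses on short supports are contradictory
    exfalso
    have hall : ∀ j : ZMod 1, j = 0 := by decide
    have hzero : ∀ a : ZMod 1 → F,
        (∃ s, (a, s) ∈ trellisBehavior S (fun _ => F) C) → a = 0 :=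
      fun a ha => hCsupp 0 a ha (fun j hj _ => absurd (hall j) hj)
    have hb := hCdualsupp 0 (fun _ => 1)
      (fun a ha => by rw [hzero a ha]; simp)
      (fun j hj _ => absurd (hall j) hj)
    exact one_ne_zero (congrFun hb 0)
  -- now the length is n + 2 ≥ 2
  clear hdimS hStateTrim' hObs' hCsupp hCdualsupp
  haveI : Fact (1 < n + 1 + 1) := ⟨by omega⟩
  have h01 : (0 : ZMod (n + 1 + 1)) ≠ 1 := zero_ne_one
  have h1ne1 : ((1 : ZMod (n + 1 + 1)) + 1) ≠ 1 := by
    intro h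
    have h' : (1 : ZMod (n + 1 + 1)) + 1 = 0 + 1 := by rw [h, zero_add]
    exact one_ne_zero (add_right_cancel h')
  have haddinj : ∀ j : ZMod (n + 1 + 1), j + 1 = 1 → j = 0 := by
    intro j h
    have h' : j + 1 = 0 + 1 := by rw [h, zero_add]
    exact add_right_cancel h'
  have e20 : ((1 : ZMod (n + 1 + 1)) + 1) - 2 = 0 := by rw [one_add_one_eq_two, sub_self]
  have e21 : ((1 : ZMod (n + 1 + 1)) + 1) - 1 = 1 := add_sub_cancel_right 1 1
  -- cleaned-up span-two-observability
  have h2O := hS2O (1 + 1)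
  simp only [e20, e21] at h2O
  -- cleaned-up span-two-controllability
  have h2C : ∀ (u : S (1 + 1)) (v : S 0), ∃ (s : ∀ j, S j) (a : ZMod (n + 1 + 1) → F),
      s (1 + 1) = u ∧ s 0 = v ∧ ∀ j, j ≠ 0 → j ≠ 1 → (s j, a j, s (j + 1)) ∈ C j := by
    intro u v
    obtain ⟨s, a, hh1, hh2, hh3⟩ := hS2C (1 + 1) u (cast (congrArg S e20.symm) v)
    simp only [e20, e21] at hh3
    refine ⟨s, a, hh1, ?_, hh3⟩
    rw [cast_fam (S := S) s e20, hh2, cast_cast, cast_eq]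
  clear hS2O hS2C
  -- Lemma A: a trajectory of T and a trajectory of T' with the same symbol sequence
  -- have the same states away from time 1
  have lemA : ∀ (a : ZMod (n + 1 + 1) → F) (r s : ∀ j, S j) (t : S1'),
      (a, r) ∈ trellisBehavior S (fun _ => F) C →
      trajT' S C S1' C0' C1' a s t → ∀ j, j ≠ 1 → r j = s j := by
    intro a r s t hb ht j hj
    refine sub_eq_zero.mp (h2O (fun j => r j - s j) (fun i hi0 hi1 => ?_) j hj)
    have hb1 : (r i, a i, r (i + 1)) ∈ C i := hb i
    have hb2 : (s i, a i, s (i + 1)) ∈ C i := ht.2.2 i hi0 hi1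
    simpa using (C i).sub_mem hb1 hb2
  -- the linking space between S (0+1) and S1'
  set Rsub : Submodule F (S (0 + 1) × S1') :=
    { carrier := {mt | ∃ v : S 0, ∃ α : F, (v, α, mt.1) ∈ C 0 ∧ (v, α, mt.2) ∈ C0'}
      zero_mem' := ⟨0, 0, (C 0).zero_mem, C0'.zero_mem⟩
      add_mem' := by
        rintro ⟨m, t⟩ ⟨m', t'⟩ ⟨v, α, hx1, hx2⟩ ⟨v', α', hy1, hy2⟩
        exact ⟨v + v', α + α', by simpa using (C 0).add_mem hx1 hy1,
          by simpa using C0'.add_mem hx2 hy2⟩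
      smul_mem' := by
        rintro c ⟨m, t⟩ ⟨v, α, hx1, hx2⟩
        exact ⟨c • v, c • α, by simpa using (C 0).smul_mem c hx1,
          by simpa using C0'.smul_mem c hx2⟩ } with hRsub
  -- R is full on the first component
  have hRsurj1 : ∀ m : S (0 + 1), ∃ t : S1', (m, t) ∈ Rsub := by
    intro m
    obtain ⟨p, hp, hp1⟩ := hStateTrim (0 + 1) m
    obtain ⟨a, r⟩ := p
    obtain ⟨s', t, hT⟩ := (hCode a).mp ⟨r, hp⟩
    have hm : r (0 + 1) = m := hp1
    refine ⟨t, r 0, a 0, ?_, ?_⟩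
    · show (r 0, a 0, m) ∈ C 0
      have h : (r 0, a 0, r (0 + 1)) ∈ C 0 := hp 0
      rwa [hm] at h
    · show (r 0, a 0, t) ∈ C0'
      rw [lemA a r s' t hp hT 0 h01]
      exact hT.1
  -- R is full on the second component
  have hRsurj2 : ∀ t : S1', ∃ m : S (0 + 1), (m, t) ∈ Rsub := by
    intro t
    obtain ⟨a, s, hT⟩ := hTrim' t
    obtain ⟨r, hr⟩ := (hCode a).mpr ⟨s, t, hT⟩
    refine ⟨r (0 + 1), r 0, a 0, hr 0, ?_⟩
    show (r 0, a 0, t) ∈ C0'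
    rw [lemA a r s t hr hT 0 h01]
    exact hT.1
  -- R meets 0 × S1' trivially
  have hRker2 : ∀ t : S1', ((0 : S (0 + 1)), t) ∈ Rsub → t = 0 := by
    rintro t ⟨v, α, hx1, hx2⟩
    obtain ⟨s, a, hs2, hs0, hout⟩ := h2C 0 v
    have hmem' : ∀ i, ((Function.update s 1 (0 : S 1)) i,
        (Function.update (Function.update a 0 α) 1 (0 : F)) i,
        (Function.update s 1 (0 : S 1)) (i + 1)) ∈ C i := by
      intro i
      rcases eq_or_ne i 0 with rfl | hi0
      · rw [show Function.update s 1 (0 : S 1) 0 = s 0 from Function.update_of_ne h01 _ _,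
          hs0,
          show Function.update (Function.update a 0 α) 1 (0 : F) 0 = α from by
            rw [Function.update_of_ne h01, Function.update_self],
          show Function.update s 1 (0 : S 1) (0 + 1) = (0 : S (0 + 1)) from by
            rw [cast_fam (S := S) (Function.update s 1 (0 : S 1))
              (zero_add (1 : ZMod (n + 1 + 1))).symm, Function.update_self,
              cast_fam_zero (S := S) (zero_add (1 : ZMod (n + 1 + 1))).symm]]
        exact hx1
      rcases eq_or_ne i 1 with rfl | hi1
      · rw [show Function.update s 1 (0 : S 1) 1 = 0 from Function.update_self _ _ _,
          show Function.update (Function.update a 0 α) 1 (0 : F) 1 = 0 from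
            Function.update_self _ _ _,
          show Function.update s 1 (0 : S 1) (1 + 1) = s (1 + 1) from
            Function.update_of_ne h1ne1 _ _, hs2]
        exact (C 1).zero_mem
      · rw [show Function.update s 1 (0 : S 1) i = s i from Function.update_of_ne hi1 _ _,
          show Function.update (Function.update a 0 α) 1 (0 : F) i = a i from by
            rw [Function.update_of_ne hi1, Function.update_of_ne hi0],
          show Function.update s 1 (0 : S 1) (i + 1) = s (i + 1) from
            Function.update_of_ne (fun h => hi0 (haddinj i h)) _ _]
        exact hout i hi0 hi1
    have hmem : (Function.update (Function.update a 0 α) 1 (0 : F),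
        Function.update s 1 (0 : S 1)) ∈ trellisBehavior S (fun _ => F) C := hmem'
    obtain ⟨s', t', hT'⟩ := (hCode _).mp ⟨_, hmem⟩
    have hes2 : s' (1 + 1) = 0 := by
      rw [← lemA _ _ s' t' hmem hT' (1 + 1) h1ne1,
        show Function.update s 1 (0 : S 1) (1 + 1) = s (1 + 1) from
          Function.update_of_ne h1ne1 _ _, hs2]
    have ht'0 : t' = 0 := by
      apply hProper'.2.2.1
      have h := hT'.2.1
      rwa [show Function.update (Function.update a 0 α) 1 (0 : F) 1 = 0 from
        Function.update_self _ _ _, hes2] at h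
    have hes0 : s' 0 = v := by
      rw [← lemA _ _ s' t' hmem hT' 0 h01,
        show Function.update s 1 (0 : S 1) 0 = s 0 from Function.update_of_ne h01 _ _, hs0]
    have hC0'v : (v, α, (0 : S1')) ∈ C0' := by
      have h := hT'.1
      rwa [hes0, show Function.update (Function.update a 0 α) 1 (0 : F) 0 = α from by
        rw [Function.update_of_ne h01, Function.update_self], ht'0] at h
    have hdiff : ((0 : S 0), (0 : F), t) ∈ C0' := by
      simpa using C0'.sub_mem hx2 hC0'v
    exact hProper'.2.1 t hdiff
  -- R meets S (0+1) × 0 trivially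
  have hRker1 : ∀ m : S (0 + 1), (m, (0 : S1')) ∈ Rsub → m = 0 := by
    rintro m ⟨v, α, hx1, hx2⟩
    obtain ⟨s, a, hs2, hs0, hout⟩ := h2C 0 v
    have hT : trajT' S C S1' C0' C1'
        (Function.update (Function.update a 0 α) 1 (0 : F)) s (0 : S1') := by
      refine ⟨?_, ?_, ?_⟩
      · rw [hs0, show Function.update (Function.update a 0 α) 1 (0 : F) 0 = α from by
          rw [Function.update_of_ne h01, Function.update_self]]
        exact hx2
      · rw [show Function.update (Function.update a 0 α) 1 (0 : F) 1 = 0 from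
          Function.update_self _ _ _, hs2]
        exact C1'.zero_mem
      · intro j hj0 hj1
        rw [show Function.update (Function.update a 0 α) 1 (0 : F) j = a j from by
          rw [Function.update_of_ne hj1, Function.update_of_ne hj0]]
        exact hout j hj0 hj1
    obtain ⟨r, hr⟩ := (hCode _).mpr ⟨s, (0 : S1'), hT⟩
    have hr1 : r 1 = 0 := by
      apply (hProper 1).1
      have h : (r 1, Function.update (Function.update a 0 α) 1 (0 : F) 1, r (1 + 1)) ∈ C 1 :=
        hr 1
      rwa [show Function.update (Function.update a 0 α) 1 (0 : F) 1 = 0 from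
        Function.update_self _ _ _,
        show r (1 + 1) = (0 : S (1 + 1)) from by
          rw [lemA _ r s 0 hr hT (1 + 1) h1ne1, hs2]] at h
    have hr01 : r (0 + 1) = (0 : S (0 + 1)) := by
      rw [cast_fam (S := S) r (zero_add (1 : ZMod (n + 1 + 1))).symm, hr1,
        cast_fam_zero (S := S) (zero_add (1 : ZMod (n + 1 + 1))).symm]
    have h3 : (v, α, (0 : S (0 + 1))) ∈ C 0 := by
      have h : (r 0, Function.update (Function.update a 0 α) 1 (0 : F) 0, r (0 + 1)) ∈ C 0 :=
        hr 0
      rwa [show r 0 = v from by rw [lemA _ r s 0 hr hT 0 h01, hs0],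
        show Function.update (Function.update a 0 α) 1 (0 : F) 0 = α from by
          rw [Function.update_of_ne h01, Function.update_self], hr01] at h
    have hdiff : ((0 : S 0), (0 : F), m) ∈ C 0 := by
      simpa using (C 0).sub_mem hx1 h3
    exact (hProper 0).2 m hdiff
  -- build the isomorphism ψ as the "graph" of R
  obtain ⟨ψ, hGraph⟩ : ∃ ψ : S (0 + 1) ≃ₗ[F] S1', ∀ (m : S (0 + 1)) (t : S1'),
      (m, t) ∈ Rsub → ψ m = t := by
    have hfbij : Function.Bijective ((LinearMap.fst F (S (0 + 1)) S1').comp Rsub.subtype) := by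
      constructor
      · intro x y hxy
        have hsub : ((x : S (0 + 1) × S1') - y) ∈ Rsub := Rsub.sub_mem x.2 y.2
        have h1 : (x : S (0 + 1) × S1').1 - (y : S (0 + 1) × S1').1 = 0 := by
          rw [sub_eq_zero]; exact hxy
        have h2 : (x : S (0 + 1) × S1').2 - (y : S (0 + 1) × S1').2 = 0 := by
          apply hRker2
          have : ((x : S (0 + 1) × S1') - y) =
              ((0 : S (0 + 1)), (x : S (0 + 1) × S1').2 - (y : S (0 + 1) × S1').2) := by
            rw [Prod.ext_iff]; exact ⟨h1, rfl⟩
          rwa [this] at hsub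
        exact Subtype.ext (Prod.ext_iff.mpr ⟨sub_eq_zero.mp h1, sub_eq_zero.mp h2⟩)
      · intro m
        obtain ⟨t, ht⟩ := hRsurj1 m
        exact ⟨⟨(m, t), ht⟩, rfl⟩
    have hgbij : Function.Bijective ((LinearMap.snd F (S (0 + 1)) S1').comp Rsub.subtype) := by
      constructor
      · intro x y hxy
        have hsub : ((x : S (0 + 1) × S1') - y) ∈ Rsub := Rsub.sub_mem x.2 y.2
        have h2 : (x : S (0 + 1) × S1').2 - (y : S (0 + 1) × S1').2 = 0 := by
          rw [sub_eq_zero]; exact hxy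
        have h1 : (x : S (0 + 1) × S1').1 - (y : S (0 + 1) × S1').1 = 0 := by
          apply hRker1
          have : ((x : S (0 + 1) × S1') - y) =
              ((x : S (0 + 1) × S1').1 - (y : S (0 + 1) × S1').1, (0 : S1')) := by
            rw [Prod.ext_iff]; exact ⟨rfl, h2⟩
          rwa [this] at hsub
        exact Subtype.ext (Prod.ext_iff.mpr ⟨sub_eq_zero.mp h1, sub_eq_zero.mp h2⟩)
      · intro t
        obtain ⟨m, hm⟩ := hRsurj2 t
        exact ⟨⟨(m, t), hm⟩, rfl⟩
    refine ⟨(LinearEquiv.ofBijective _ hfbij).symm.trans (LinearEquiv.ofBijective _ hgbij),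
      ?_⟩
    intro m t h
    have h1 : (LinearEquiv.ofBijective _ hfbij) ⟨(m, t), h⟩ = m := rfl
    have h2 : (LinearEquiv.ofBijective _ hfbij).symm m = ⟨(m, t), h⟩ :=
      (LinearEquiv.symm_apply_eq _).mpr h1.symm
    show (LinearEquiv.ofBijective _ hgbij) ((LinearEquiv.ofBijective _ hfbij).symm m) = t
    rw [h2]
    rfl
  -- transport of branches at time 0
  have K0 : ∀ (v : S 0) (α : F) (m : S (0 + 1)), (v, α, m) ∈ C 0 → (v, α, ψ m) ∈ C0' := by
    intro v α m hx
    obtain ⟨p, hp, he⟩ := hBranchTrim 0 (v, α, m) hx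
    obtain ⟨a, r⟩ := p
    obtain ⟨s', t, hT⟩ := (hCode a).mp ⟨r, hp⟩
    have he0 : r 0 = v := congrArg (fun z => z.1) he
    have he1 : a 0 = α := congrArg (fun z => z.2.1) he
    have he2 : r (0 + 1) = m := congrArg (fun z => z.2.2) he
    have hC0' : (v, α, t) ∈ C0' := by
      have h := hT.1
      rwa [← lemA a r s' t hp hT 0 h01, he0, he1] at h
    have hmemR : (m, t) ∈ Rsub := ⟨v, α, hx, hC0'⟩
    rw [hGraph m t hmemR]
    exact hC0'
  -- transport of branches at time 1
  have K1 : ∀ (m : S 1) (β : F) (w : S (1 + 1)), (m, β, w) ∈ C 1 →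
      (ψ (cast (congrArg S (zero_add (1 : ZMod (n + 1 + 1))).symm) m), β, w) ∈ C1' := by
    intro m β w hy
    obtain ⟨p, hp, he⟩ := hBranchTrim 1 (m, β, w) hy
    obtain ⟨a, r⟩ := p
    obtain ⟨s', t, hT⟩ := (hCode a).mp ⟨r, hp⟩
    have he0 : r 1 = m := congrArg (fun z => z.1) he
    have he1 : a 1 = β := congrArg (fun z => z.2.1) he
    have he2 : r (1 + 1) = w := congrArg (fun z => z.2.2) he
    have hmemR : (r (0 + 1), t) ∈ Rsub := by
      refine ⟨r 0, a 0, hp 0, ?_⟩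
      have h := hT.1
      rwa [← lemA a r s' t hp hT 0 h01] at h
    have hcast : cast (congrArg S (zero_add (1 : ZMod (n + 1 + 1))).symm) m = r (0 + 1) := by
      rw [← he0]
      exact (cast_fam (S := S) r (zero_add (1 : ZMod (n + 1 + 1))).symm).symm
    rw [hcast, hGraph _ t hmemR]
    have h := hT.2.1
    rwa [← lemA a r s' t hp hT (1 + 1) h1ne1, he1, he2] at h
  -- dimension count at time 0
  have hr0 : Module.finrank F ((C 0).map
      ((LinearMap.id (R := F) (M := S 0)).prodMap (LinearMap.fst F F (S (0 + 1)))))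
      = Module.finrank F (C 0) := finrank_map_fst_fst _ (hProper 0).2
  have hr0' : Module.finrank F (C0'.map
      ((LinearMap.id (R := F) (M := S 0)).prodMap (LinearMap.fst F F S1')))
      = Module.finrank F C0' := finrank_map_fst_fst _ hProper'.2.1
  have hle0 : (C 0).map ((LinearMap.id (R := F) (M := S 0)).prodMap (LinearMap.fst F F (S (0 + 1))))
      ≤ C0'.map ((LinearMap.id (R := F) (M := S 0)).prodMap (LinearMap.fst F F S1')) := by
    rintro x ⟨⟨v, α, m⟩, hx, rfl⟩
    exact ⟨(v, α, ψ m), K0 v α m hx, rfl⟩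
  have heq0 : (C 0).map ((LinearMap.id (R := F) (M := S 0)).prodMap (LinearMap.fst F F (S (0 + 1))))
      = C0'.map ((LinearMap.id (R := F) (M := S 0)).prodMap (LinearMap.fst F F S1')) :=
    Submodule.eq_of_le_of_finrank_le hle0 (by rw [hr0, hr0']; exact hdimC0)
  -- dimension count at time 1
  have hr1 : Module.finrank F ((C 1).map (LinearMap.snd F (S 1) (F × S (1 + 1))))
      = Module.finrank F (C 1) := finrank_map_snd' _ (fun m hm => (hProper 1).1 m hm)
  have hr1' : Module.finrank F (C1'.map (LinearMap.snd F S1' (F × S (1 + 1))))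
      = Module.finrank F C1' := finrank_map_snd' _ (fun t ht => hProper'.2.2.1 t ht)
  have hle1 : (C 1).map (LinearMap.snd F (S 1) (F × S (1 + 1)))
      ≤ C1'.map (LinearMap.snd F S1' (F × S (1 + 1))) := by
    rintro x ⟨⟨m, β, w⟩, hy, rfl⟩
    exact ⟨(ψ (cast (congrArg S (zero_add (1 : ZMod (n + 1 + 1))).symm) m), β, w),
      K1 m β w hy, rfl⟩
  have heq1 : (C 1).map (LinearMap.snd F (S 1) (F × S (1 + 1)))
      = C1'.map (LinearMap.snd F S1' (F × S (1 + 1))) :=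
    Submodule.eq_of_le_of_finrank_le hle1 (by rw [hr1, hr1']; exact hdimC1)
  -- conclusion
  refine ⟨ψ, ?_, ?_, ψ.symm.finrank_eq⟩
  · intro z
    constructor
    · intro hz
      have hz' : ((LinearMap.id (R := F) (M := S 0)).prodMap (LinearMap.fst F F S1')) z ∈
          C0'.map ((LinearMap.id (R := F) (M := S 0)).prodMap (LinearMap.fst F F S1')) :=
        ⟨z, hz, rfl⟩
      rw [← heq0] at hz'
      obtain ⟨⟨v, α, m⟩, hx, hπ⟩ := hz'
      obtain ⟨zv, zα, zt⟩ := z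
      have h1 : v = zv := congrArg Prod.fst hπ
      have h2 : α = zα := congrArg (fun y => y.2) hπ
      refine ⟨(v, α, m), hx, ?_⟩
      have hmem := K0 v α m hx
      subst h1; subst h2
      have hdiff : ((0 : S 0), (0 : F), zt - ψ m) ∈ C0' := by
        simpa using C0'.sub_mem hz hmem
      have h3 : zt = ψ m := sub_eq_zero.mp (hProper'.2.1 _ hdiff)
      rw [h3]
    · rintro ⟨⟨v, α, m⟩, hx, rfl⟩
      exact K0 v α m hx
  · intro z
    constructor
    · intro hz
      have hz' : (LinearMap.snd F S1' (F × S (1 + 1))) z ∈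
          C1'.map (LinearMap.snd F S1' (F × S (1 + 1))) := ⟨z, hz, rfl⟩
      rw [← heq1] at hz'
      obtain ⟨⟨m, β, w⟩, hy, hπ⟩ := hz'
      obtain ⟨zt, zβ, zw⟩ := z
      have h1 : β = zβ := congrArg Prod.fst hπ
      have h2 : w = zw := congrArg (fun y => y.2) hπ
      refine ⟨(m, β, w), hy, ?_⟩
      have hmem := K1 m β w hy
      subst h1; subst h2
      have hdiff : (zt - ψ (cast (congrArg S (zero_add (1 : ZMod (n + 1 + 1))).symm) m),
          (0 : F), (0 : S (1 + 1))) ∈ C1' := by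
        convert C1'.sub_mem hz hmem using 1; simp
      have h3 : zt = ψ (cast (congrArg S (zero_add (1 : ZMod (n + 1 + 1))).symm) m) :=
        sub_eq_zero.mp (hProper'.2.2.1 _ hdiff)
      rw [h3]
    · rintro ⟨⟨m, β, w⟩, hy, rfl⟩
      exact K1 m β w hy
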